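/- Let η : ℝ → ℝ be Lebesgue measurable with η(x₁) > 0 for every x₁ ∈ Σ, and let g : ℝ² → ℝ be Borel measurable and integrable on the subgraph domain Ω_η. Then the function (x̂₁,x̂₂) ↦ g(x̂₁, η(x̂₁)·x̂₂)·η(x̂₁) is integrable on Ω̂ and ∫_{Ω_η} g dλ² = ∫_{Ω̂} g(x̂₁, η(x̂₁)·x̂₂)·η(x̂₁) dλ²(x̂₁,x̂₂). -/
import Mathlib


open MeasureTheory

/-- The subgraph domain `Ω_η = {(x₁,x₂) : x₁ ∈ (0,L₁), 0 < x₂ < η(x₁)}`. -/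
def subgraph (L₁ : ℝ) (η : ℝ → ℝ) : Set (ℝ × ℝ) :=
  {p : ℝ × ℝ | p.1 ∈ Set.Ioo 0 L₁ ∧ p.2 ∈ Set.Ioo 0 (η p.1)}

/-- The reference domain `Ω̂ = (0,L₁) × (0,1)`. -/
def refDomain (L₁ : ℝ) : Set (ℝ × ℝ) := Set.Ioo 0 L₁ ×ˢ Set.Ioo (0 : ℝ) 1

lemma img_Ioo {c : ℝ} (hc : 0 < c) : (fun t : ℝ => c * t) '' Set.Ioo 0 1 = Set.Ioo 0 c := by
  rw [Set.image_mul_left_Ioo hc, mul_zero, mul_one]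

lemma cov_deriv {c : ℝ} : ∀ x ∈ Set.Ioo (0:ℝ) 1,
    HasDerivWithinAt (fun t : ℝ => c * t) c (Set.Ioo (0:ℝ) 1) x := by
  intro x _
  simpa using ((hasDerivAt_id x).const_mul c).hasDerivWithinAt

lemma cov_inj {c : ℝ} (hc : 0 < c) : Set.InjOn (fun t : ℝ => c * t) (Set.Ioo (0:ℝ) 1) :=
  fun a _ b _ hab => mul_left_cancel₀ hc.ne' hab

lemma cov_integral {c : ℝ} (hc : 0 < c) (h : ℝ → ℝ) :
    ∫ x in Set.Ioo 0 c, h x = ∫ t in Set.Ioo (0:ℝ) 1, h (c * t) * c := by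
  rw [← img_Ioo hc,
    integral_image_eq_integral_abs_deriv_smul measurableSet_Ioo cov_deriv (cov_inj hc)]
  refine integral_congr_ae (Filter.Eventually.of_forall fun t => ?_)
  simp [abs_of_pos hc, mul_comm]

lemma cov_integrable {c : ℝ} (hc : 0 < c) (h : ℝ → ℝ) :
    IntegrableOn h (Set.Ioo 0 c) ↔
      IntegrableOn (fun t => h (c * t) * c) (Set.Ioo (0:ℝ) 1) := by
  rw [← img_Ioo hc,
    integrableOn_image_iff_integrableOn_abs_deriv_smul measurableSet_Ioo cov_deriv (cov_inj hc)]
  have e : (fun x => |c| • h (c * x)) = fun t => h (c * t) * c := by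
    funext t; simp [abs_of_pos hc, mul_comm]
  rw [e]

/-- Change of variables via the ALE map `A_η(xh₁,xh₂) = (xh₁, η(xh₁)xh₂)`
(whose Jacobian determinant is `η(xh₁)`): the transported integrand is integrable on
the reference domain and the integrals agree (cf. the Piola transformation
`dx = η dxh` in \eqref{Piola}). -/
theorem integral_subgraph_eq_integral_refDomain
    (L₁ : ℝ) (hL : 0 < L₁)
    (η : ℝ → ℝ) (hη : Measurable η) (hpos : ∀ x₁ ∈ Set.Ioo (0 : ℝ) L₁, 0 < η x₁)
    (g : ℝ × ℝ → ℝ) (hg : Measurable g)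
    (hint : IntegrableOn g (subgraph L₁ η)) :
    IntegrableOn (fun xh : ℝ × ℝ => g (xh.1, η xh.1 * xh.2) * η xh.1) (refDomain L₁) ∧
    ∫ x in subgraph L₁ η, g x
      = ∫ xh in refDomain L₁, g (xh.1, η xh.1 * xh.2) * η xh.1 := by
  have hS : MeasurableSet (subgraph L₁ η) := by
    have h1 : MeasurableSet {p : ℝ × ℝ | p.1 ∈ Set.Ioo 0 L₁} :=
      measurable_fst measurableSet_Ioo
    have h2 : MeasurableSet {p : ℝ × ℝ | 0 < p.2} :=
      measurableSet_lt measurable_const measurable_snd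
    have h3 : MeasurableSet {p : ℝ × ℝ | p.2 < η p.1} :=
      measurableSet_lt measurable_snd (hη.comp measurable_fst)
    have e : subgraph L₁ η
        = {p : ℝ × ℝ | p.1 ∈ Set.Ioo 0 L₁} ∩ ({p | 0 < p.2} ∩ {p | p.2 < η p.1}) := by
      ext p; simp [subgraph, Set.mem_Ioo, and_assoc]
    rw [e]; exact h1.inter (h2.inter h3)
  have hRef : MeasurableSet (refDomain L₁) := measurableSet_Ioo.prod measurableSet_Ioo
  set F : ℝ × ℝ → ℝ := (subgraph L₁ η).indicator g with hFdef
  set G : ℝ × ℝ → ℝ :=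
    (refDomain L₁).indicator (fun xh => g (xh.1, η xh.1 * xh.2) * η xh.1) with hGdef
  have hF : Integrable F := (integrable_indicator_iff hS).2 hint
  have hGm : Measurable fun xh : ℝ × ℝ => g (xh.1, η xh.1 * xh.2) * η xh.1 :=
    (hg.comp (measurable_fst.prodMk ((hη.comp measurable_fst).mul measurable_snd))).mul
      (hη.comp measurable_fst)
  have hGmeas : Measurable G := hGm.indicator hRef
  -- slice descriptions
  have hFslice : ∀ x₁ ∈ Set.Ioo 0 L₁,
      (fun x₂ => F (x₁, x₂)) = (Set.Ioo 0 (η x₁)).indicator (fun x₂ => g (x₁, x₂)) := by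
    intro x₁ hx₁; funext x₂
    by_cases h : x₂ ∈ Set.Ioo 0 (η x₁)
    · have hm : (x₁, x₂) ∈ subgraph L₁ η := ⟨hx₁, h⟩
      rw [show F (x₁, x₂) = g (x₁, x₂) from Set.indicator_of_mem hm g,
        Set.indicator_of_mem h]
    · have hm : (x₁, x₂) ∉ subgraph L₁ η := fun hc => h hc.2
      rw [show F (x₁, x₂) = 0 from Set.indicator_of_notMem hm g,
        Set.indicator_of_notMem h]
  have hFslice0 : ∀ x₁ ∉ Set.Ioo 0 L₁, (fun x₂ => F (x₁, x₂)) = fun _ => 0 := by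
    intro x₁ hx₁; funext x₂
    have hm : (x₁, x₂) ∉ subgraph L₁ η := fun hc => hx₁ hc.1
    exact Set.indicator_of_notMem hm g
  have hGslice : ∀ x₁ ∈ Set.Ioo 0 L₁,
      (fun t => G (x₁, t))
        = (Set.Ioo (0:ℝ) 1).indicator (fun t => g (x₁, η x₁ * t) * η x₁) := by
    intro x₁ hx₁; funext t
    by_cases h : t ∈ Set.Ioo (0:ℝ) 1
    · have hm : (x₁, t) ∈ refDomain L₁ := Set.mk_mem_prod hx₁ h
      rw [show G (x₁, t) = g (x₁, η x₁ * t) * η x₁ from Set.indicator_of_mem hm _,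
        Set.indicator_of_mem h]
    · have hm : (x₁, t) ∉ refDomain L₁ := fun hc => h hc.2
      rw [show G (x₁, t) = 0 from Set.indicator_of_notMem hm _,
        Set.indicator_of_notMem h]
  have hGslice0 : ∀ x₁ ∉ Set.Ioo 0 L₁, (fun t => G (x₁, t)) = fun _ => 0 := by
    intro x₁ hx₁; funext t
    have hm : (x₁, t) ∉ refDomain L₁ := fun hc => hx₁ hc.1
    exact Set.indicator_of_notMem hm _
  -- inner integrals agree
  have hinner : ∀ x₁ : ℝ, ∫ x₂, F (x₁, x₂) = ∫ t, G (x₁, t) := by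
    intro x₁
    by_cases hx₁ : x₁ ∈ Set.Ioo 0 L₁
    · rw [hFslice x₁ hx₁, hGslice x₁ hx₁, integral_indicator measurableSet_Ioo,
        integral_indicator measurableSet_Ioo, cov_integral (hpos x₁ hx₁)]
    · rw [hFslice0 x₁ hx₁, hGslice0 x₁ hx₁]
  -- inner integrals of norms agree
  have hnorm : ∀ x₁ : ℝ, ∫ x₂, ‖F (x₁, x₂)‖ = ∫ t, ‖G (x₁, t)‖ := by
    intro x₁
    by_cases hx₁ : x₁ ∈ Set.Ioo 0 L₁
    · have e1 : (fun x₂ => ‖F (x₁, x₂)‖)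
          = (Set.Ioo 0 (η x₁)).indicator fun x₂ => ‖g (x₁, x₂)‖ := by
        funext x₂
        rw [congrFun (hFslice x₁ hx₁) x₂, norm_indicator_eq_indicator_norm]
      have e2 : (fun t => ‖G (x₁, t)‖)
          = (Set.Ioo (0:ℝ) 1).indicator fun t => ‖g (x₁, η x₁ * t) * η x₁‖ := by
        funext t
        rw [congrFun (hGslice x₁ hx₁) t, norm_indicator_eq_indicator_norm]
      rw [e1, e2, integral_indicator measurableSet_Ioo, integral_indicator measurableSet_Ioo,
        cov_integral (hpos x₁ hx₁)]
      refine integral_congr_ae (Filter.Eventually.of_forall fun t => ?_)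
      have hc := hpos x₁ hx₁
      simp [Real.norm_eq_abs, abs_mul, abs_of_pos hc]
    · have e1 : (fun x₂ => ‖F (x₁, x₂)‖) = fun _ => (0:ℝ) := by
        funext x₂; rw [congrFun (hFslice0 x₁ hx₁) x₂]; simp
      have e2 : (fun t => ‖G (x₁, t)‖) = fun _ => (0:ℝ) := by
        funext t; rw [congrFun (hGslice0 x₁ hx₁) t]; simp
      rw [e1, e2]
  -- integrability of G
  have hF' : Integrable F ((volume : Measure ℝ).prod volume) := by
    rwa [Measure.volume_eq_prod] at hF
  have hae : ∀ᵐ x₁ : ℝ, Integrable fun t => G (x₁, t) := by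
    filter_upwards [hF'.prod_right_ae] with x₁ hx
    by_cases hx₁ : x₁ ∈ Set.Ioo 0 L₁
    · rw [hGslice x₁ hx₁, integrable_indicator_iff measurableSet_Ioo]
      have hIx : IntegrableOn (fun x₂ => g (x₁, x₂)) (Set.Ioo 0 (η x₁)) := by
        rw [hFslice x₁ hx₁] at hx
        exact (integrable_indicator_iff measurableSet_Ioo).1 hx
      exact (cov_integrable (hpos x₁ hx₁) fun x₂ => g (x₁, x₂)).1 hIx
    · rw [hGslice0 x₁ hx₁]
      exact integrable_zero _ _ _
  have hnormint : Integrable fun x₁ : ℝ => ∫ t, ‖G (x₁, t)‖ := by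
    have h0 := hF'.integral_norm_prod_left
    have e : (fun x₁ : ℝ => ∫ x₂, ‖F (x₁, x₂)‖) = fun x₁ => ∫ t, ‖G (x₁, t)‖ :=
      funext hnorm
    exact e ▸ h0
  have hG' : Integrable G ((volume : Measure ℝ).prod volume) :=
    (integrable_prod_iff hGmeas.aestronglyMeasurable).2 ⟨hae, hnormint⟩
  have hG : Integrable G := by rwa [Measure.volume_eq_prod]
  constructor
  · exact (integrable_indicator_iff hRef).1 hG
  · rw [← integral_indicator hS, ← integral_indicator hRef, Measure.volume_eq_prod,
      integral_prod _ hF', integral_prod _ hG']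
    exact integral_congr_ae (Filter.Eventually.of_forall hinner)
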